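/- arXiv:1602.03020 — 5 statements merged into one kernel-verified Lean document; each statement's English description precedes it below -/
import Mathlib

section
/- Let A be a finite alphabet, let Y be a finite set of pairwise non-confinal left-infinite words over A, and let Q be a positive integer. Then there exists q ∈ ℕ such that for every integer m ≥ q: (a) for all distinct y₁, y₂ ∈ Y, the gap satisfies g(tₘ y₁, tₘ y₂) > Q; and (b) for every y ∈ Y that is not periodic, g(tₘ y, tₘ y) > Q. -/
/- Left-infinite words over an alphabet `A` are functions `ℕ → A`;
`w n` is the letter at distance `n` from the right end. -/

variable {A : Type*}

/-- `app w z` appends the finite word `z` on the right of the left-infinite word `w`. -/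
def app (w : ℕ → A) (z : List A) : ℕ → A :=
  fun n => if h : n < z.length then z.get ⟨z.length - 1 - n, by omega⟩ else w (n - z.length)

/-- `suff m w` is the suffix of length `m` of `w`: the finite word `w (m-1) ⋯ w 1 w 0`. -/
def suff (m : ℕ) (w : ℕ → A) : List A :=
  List.ofFn (fun i : Fin m => w (m - 1 - i))

/-- Two left-infinite words are confinal if they share a common left-infinite prefix. -/
def Confinal (v₁ v₂ : ℕ → A) : Prop :=
  ∃ (y : ℕ → A) (z₁ z₂ : List A), v₁ = app y z₁ ∧ v₂ = app y z₂

/-- `negPow u hu` is the periodic left-infinite word `u⁻∞ = ⋯uuu`. -/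
def negPow (u : List A) (hu : u ≠ []) : ℕ → A :=
  fun n => u.get ⟨u.length - 1 - n % u.length, by
    have h : u.length ≠ 0 := fun h0 => hu (List.length_eq_zero_iff.mp h0)
    omega⟩

/-- A left-infinite word is periodic if it is `u⁻∞` for some nonempty finite word `u`. -/
def Periodic (w : ℕ → A) : Prop :=
  ∃ (u : List A) (hu : u ≠ []), w = negPow u hu

/-- The gap between two finite words `w₁, w₂`:
`g(w₁,w₂) = min {|u| : u ∈ A⁺, ∃ v ∈ A⁺, w₁u = vw₂ or w₂u = vw₁}`. -/
noncomputable def gap (w₁ w₂ : List A) : ℕ :=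
  sInf {n : ℕ | ∃ u v : List A, u ≠ [] ∧ v ≠ [] ∧ u.length = n ∧
    (w₁ ++ u = v ++ w₂ ∨ w₂ ++ u = v ++ w₁)}

/-- `listPow u n` is the `n`-fold concatenation `uⁿ`. -/
def listPow (u : List A) : ℕ → List A
  | 0 => []
  | n + 1 => u ++ listPow u n

/-- A nonempty finite word is primitive if it is not of the form `xⁿ` with `n ≥ 2`. -/
def Primitive (u : List A) : Prop :=
  u ≠ [] ∧ ∀ (x : List A) (n : ℕ), 2 ≤ n → u ≠ listPow x n

/-- `tk k w`: the longest suffix of `w` of length at most `k`. -/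
def tk (k : ℕ) (w : List A) : List A := w.drop (w.length - k)

/-- `ik k w`: the longest prefix of `w` of length at most `k`. -/
def ik (k : ℕ) (w : List A) : List A := w.take k

/-- The factor of `w = a₁⋯aₙ` of length `M` ending at the (1-indexed) position `m`:
`a_{m-M+1} ⋯ a_m`. -/
def factorAt (M : ℕ) (w : List A) (m : ℕ) : List A := (w.take m).drop (m - M)

/-- `m` is a bound of `w` w.r.t. the set `B ⊆ A^M` of borders. -/
def IsBound (B : Set (List A)) (M : ℕ) (w : List A) (m : ℕ) : Prop :=
  M ≤ m ∧ m ≤ w.length ∧ factorAt M w m ∈ B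

/- The splitting point of `w`: its last bound if it has one, and `|w|` otherwise. -/
open Classical in
noncomputable def splitPoint (B : Set (List A)) (M : ℕ) (w : List A) : ℕ :=
  if ∃ m, IsBound B M w m then sSup {m | IsBound B M w m} else w.length

/-- `Phik k w`: the sequence of all factors of `w` of length `k+1`, in the order
in which they occur in `w`. -/
def Phik (k : ℕ) (w : List A) : List (List A) :=
  List.ofFn (fun i : Fin (w.length - k) => (w.drop i).take (k + 1))

/-- A Lyndon word: a primitive word lexicographically minimal in its conjugacy class. -/
def IsLyndon [LinearOrder A] (u : List A) : Prop :=
  Primitive u ∧ ∀ w₁ w₂ : List A, u = w₁ ++ w₂ → u ≤ w₂ ++ w₁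

/-- `A^{-∞}`: the disjoint union of the nonempty finite words and the
left-infinite words over `A`. -/
def Ainf (A : Type*) := {l : List A // l ≠ []} ⊕ (ℕ → A)

/-- Multiplication on `A^{-∞}`: concatenation of finite words; appending a finite word
on the right of a left-infinite word; left-infinite words are right zeros. -/
def mulAinf : Ainf A → Ainf A → Ainf A
  | Sum.inl u, Sum.inl v => Sum.inl ⟨u.1 ++ v.1, fun h => u.2 (List.append_eq_nil_iff.mp h).1⟩
  | Sum.inl _, Sum.inr w => Sum.inr w
  | Sum.inr w, Sum.inl z => Sum.inr (app w z.1)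
  | Sum.inr _, Sum.inr w => Sum.inr w

section Aux
variable {A : Type*}

lemma suff_length (m : ℕ) (y : ℕ → A) : (suff m y).length = m := by simp [suff]

lemma suff_getElem (m : ℕ) (y : ℕ → A) (i : ℕ) (h : i < m) :
    (suff m y)[i]'(by rw [suff_length]; exact h) = y (m - 1 - i) := by
  simp [suff]

lemma suff_ne_nil {m : ℕ} (hm : 1 ≤ m) (y : ℕ → A) : suff m y ≠ [] := by
  intro h0
  have := congrArg List.length h0
  rw [suff_length] at this
  simp at this; omega

lemma confinal_of_shift {y₁ y₂ : ℕ → A} {n : ℕ}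
    (h : ∀ j, n ≤ j → y₂ j = y₁ (j - n)) : Confinal y₁ y₂ := by
  refine ⟨y₁, [], suff n y₂, ?_, ?_⟩
  · funext j; simp [app]
  · funext j
    by_cases hj : j < n
    · simp only [app, suff_length, dif_pos hj, List.get_eq_getElem]
      rw [suff_getElem n y₂ (n - 1 - j) (by omega)]
      congr 1; omega
    · simp only [app, suff_length, dif_neg hj]
      exact h j (by omega)

lemma periodic_of_shift {y : ℕ → A} {n : ℕ} (hn : 1 ≤ n)
    (h : ∀ j, n ≤ j → y j = y (j - n)) : Periodic y := by
  refine ⟨suff n y, suff_ne_nil hn y, ?_⟩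
  funext j
  have hmod : ∀ j, y j = y (j % n) := by
    intro j
    induction j using Nat.strong_induction_on with
    | _ j ih =>
      by_cases hj : j < n
      · rw [Nat.mod_eq_of_lt hj]
      · have e : j % n = (j - n) % n := Nat.mod_eq_sub_mod (by omega)
        rw [h j (by omega), ih (j - n) (by omega), ← e]
  simp only [negPow, List.get_eq_getElem, suff_length]
  rw [suff_getElem n y (n - 1 - j % n) (by omega)]
  rw [hmod j]
  congr 1
  have : j % n < n := Nat.mod_lt _ (by omega)
  omega

lemma shift_of_append {m n : ℕ} {y₁ y₂ : ℕ → A} {u v : List A}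
    (hu : u.length = n) (hv : v.length = n)
    (h : suff m y₁ ++ u = v ++ suff m y₂) {j : ℕ} (hj1 : n ≤ j) (hj2 : j < m) :
    y₂ j = y₁ (j - n) := by
  have hi : n + (m - 1 - j) < m := by omega
  have hlen : n + (m - 1 - j) < (suff m y₁ ++ u).length := by
    rw [List.length_append, suff_length]; omega
  have h1 : (suff m y₁ ++ u)[n + (m - 1 - j)]'hlen = y₁ (m - 1 - (n + (m - 1 - j))) := by
    rw [List.getElem_append_left (by rw [suff_length]; omega)]
    exact suff_getElem m y₁ _ hi
  have hlen2 : n + (m - 1 - j) < (v ++ suff m y₂).length := h ▸ hlen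
  have h2 : (v ++ suff m y₂)[n + (m - 1 - j)]'hlen2 = y₂ (m - 1 - (m - 1 - j)) := by
    rw [List.getElem_append_right (by omega)]
    have e : n + (m - 1 - j) - v.length = m - 1 - j := by omega
    simp_rw [e]
    exact suff_getElem m y₂ _ (by omega)
  have heq : y₁ (m - 1 - (n + (m - 1 - j))) = y₂ (m - 1 - (m - 1 - j)) := by
    rw [← h1, ← h2]
    exact List.getElem_of_eq h _
  have e1 : m - 1 - (n + (m - 1 - j)) = j - n := by omega
  have e2 : m - 1 - (m - 1 - j) = j := by omega
  rw [e1, e2] at heq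
  exact heq.symm

end Aux

set_option maxHeartbeats 2000000 in
/-- for a finite set `Y` of pairwise non-confinal left-infinite words and
`Q > 0`, there is `q` such that for all `m ≥ q`: (a) distinct members of `Y` have suffixes
of length `m` with gap `> Q`; (b) non-periodic members have self-gap `> Q`. -/
theorem stmt0 [Fintype A] (Y : Set (ℕ → A)) (hYfin : Y.Finite)
    (hY : ∀ y₁ ∈ Y, ∀ y₂ ∈ Y, y₁ ≠ y₂ → ¬ Confinal y₁ y₂)
    (Q : ℕ) (hQ : 0 < Q) :
    ∃ q : ℕ, ∀ m : ℕ, q ≤ m →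
      (∀ y₁ ∈ Y, ∀ y₂ ∈ Y, y₁ ≠ y₂ → Q < gap (suff m y₁) (suff m y₂)) ∧
      (∀ y ∈ Y, ¬ Periodic y → Q < gap (suff m y) (suff m y)) := by
  classical
  set s := hYfin.toFinset with hs
  obtain ⟨q, hq1', hWlt⟩ : ∃ q : ℕ, 1 ≤ q ∧ ∀ y₁ ∈ Y, ∀ y₂ ∈ Y, ∀ n ≤ Q,
      sInf {j | n ≤ j ∧ y₂ j ≠ y₁ (j - n)} < q := by
    refine ⟨1 + s.sup (fun y₁ => s.sup (fun y₂ => (Finset.range (Q + 1)).sup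
      (fun n => sInf {j | n ≤ j ∧ y₂ j ≠ y₁ (j - n)}))), Nat.le_add_right 1 _, ?_⟩
    intro y₁ h₁ y₂ h₂ n hn
    have m1 : y₁ ∈ s := hYfin.mem_toFinset.mpr h₁
    have m2 : y₂ ∈ s := hYfin.mem_toFinset.mpr h₂
    have hnmem : n ∈ Finset.range (Q + 1) := Finset.mem_range.mpr (Nat.lt_succ_of_le hn)
    have c1 : sInf {j | n ≤ j ∧ y₂ j ≠ y₁ (j - n)} ≤
        (Finset.range (Q + 1)).sup (fun n => sInf {j | n ≤ j ∧ y₂ j ≠ y₁ (j - n)}) :=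
      Finset.le_sup (f := fun n => sInf {j | n ≤ j ∧ y₂ j ≠ y₁ (j - n)}) hnmem
    have c2 : (Finset.range (Q + 1)).sup (fun n => sInf {j | n ≤ j ∧ y₂ j ≠ y₁ (j - n)}) ≤
        s.sup (fun y₂ => (Finset.range (Q + 1)).sup
          (fun n => sInf {j | n ≤ j ∧ y₂ j ≠ y₁ (j - n)})) :=
      Finset.le_sup (f := fun y₂ => (Finset.range (Q + 1)).sup
        (fun n => sInf {j | n ≤ j ∧ y₂ j ≠ y₁ (j - n)})) m2
    have c3 : s.sup (fun y₂ => (Finset.range (Q + 1)).sup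
          (fun n => sInf {j | n ≤ j ∧ y₂ j ≠ y₁ (j - n)})) ≤
        s.sup (fun y₁ => s.sup (fun y₂ => (Finset.range (Q + 1)).sup
          (fun n => sInf {j | n ≤ j ∧ y₂ j ≠ y₁ (j - n)}))) :=
      Finset.le_sup (f := fun y₁ => s.sup (fun y₂ => (Finset.range (Q + 1)).sup
        (fun n => sInf {j | n ≤ j ∧ y₂ j ≠ y₁ (j - n)}))) m1
    exact lt_of_le_of_lt (le_trans c1 (le_trans c2 c3)) (Nat.lt_add_of_pos_left one_pos)
  have hq1 : 1 ≤ q := hq1'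
  have hmain : ∀ m, q ≤ m → ∀ y₁ ∈ Y, ∀ y₂ ∈ Y,
      (∀ n, 1 ≤ n → n ≤ Q → {j | n ≤ j ∧ y₂ j ≠ y₁ (j - n)}.Nonempty ∧
        {j | n ≤ j ∧ y₁ j ≠ y₂ (j - n)}.Nonempty) →
      Q < gap (suff m y₁) (suff m y₂) := by
    intro m hm y₁ h₁ y₂ h₂ hne
    by_contra hg
    push_neg at hg
    have hm1 : 1 ≤ m := le_trans hq1 hm
    have hSne : {n : ℕ | ∃ u v : List A, u ≠ [] ∧ v ≠ [] ∧ u.length = n ∧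
        (suff m y₁ ++ u = v ++ suff m y₂ ∨ suff m y₂ ++ u = v ++ suff m y₁)}.Nonempty :=
      ⟨m, suff m y₂, suff m y₁, suff_ne_nil hm1 _, suff_ne_nil hm1 _, suff_length m y₂,
        Or.inl rfl⟩
    have hmem : ∃ u v : List A, u ≠ [] ∧ v ≠ [] ∧
        u.length = gap (suff m y₁) (suff m y₂) ∧
        (suff m y₁ ++ u = v ++ suff m y₂ ∨ suff m y₂ ++ u = v ++ suff m y₁) :=
      Nat.sInf_mem hSne
    set n := gap (suff m y₁) (suff m y₂) with hn
    obtain ⟨u, v, hu, hv, hul, hcase⟩ := hmem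
    have hn1 : 1 ≤ n := by rw [← hul]; exact List.length_pos_iff.mpr hu
    have hvl : v.length = n := by
      rcases hcase with hc | hc <;>
      · have := congrArg List.length hc
        simp only [List.length_append, suff_length, hul] at this
        omega
    obtain ⟨hne1, hne2⟩ := hne n hn1 hg
    rcases hcase with hc | hc
    · have hj : sInf {j | n ≤ j ∧ y₂ j ≠ y₁ (j - n)} ∈
          {j | n ≤ j ∧ y₂ j ≠ y₁ (j - n)} := Nat.sInf_mem hne1
      obtain ⟨hj1, hj2⟩ := hj
      exact hj2 (shift_of_append hul hvl hc hj1
        (lt_of_lt_of_le (hWlt y₁ h₁ y₂ h₂ n hg) hm))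
    · have hj : sInf {j | n ≤ j ∧ y₁ j ≠ y₂ (j - n)} ∈
          {j | n ≤ j ∧ y₁ j ≠ y₂ (j - n)} := Nat.sInf_mem hne2
      obtain ⟨hj1, hj2⟩ := hj
      exact hj2 (shift_of_append hul hvl hc hj1
        (lt_of_lt_of_le (hWlt y₂ h₂ y₁ h₁ n hg) hm))
  refine ⟨q, fun m hm => ⟨?_, ?_⟩⟩
  · intro y₁ h₁ y₂ h₂ h12
    refine hmain m hm y₁ h₁ y₂ h₂ (fun n hn1 hnQ => ⟨?_, ?_⟩)
    · have hall : ¬ ∀ j, n ≤ j → y₂ j = y₁ (j - n) :=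
        fun hall => hY y₁ h₁ y₂ h₂ h12 (confinal_of_shift hall)
      push_neg at hall
      obtain ⟨j, hj1, hj2⟩ := hall
      exact ⟨j, hj1, hj2⟩
    · have hall : ¬ ∀ j, n ≤ j → y₁ j = y₂ (j - n) :=
        fun hall => hY y₂ h₂ y₁ h₁ h12.symm (confinal_of_shift hall)
      push_neg at hall
      obtain ⟨j, hj1, hj2⟩ := hall
      exact ⟨j, hj1, hj2⟩
  · intro y hy hper
    refine hmain m hm y hy y hy (fun n hn1 hnQ => ?_)
    have hall : ¬ ∀ j, n ≤ j → y j = y (j - n) :=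
      fun hall => hper (periodic_of_shift hn1 hall)
    push_neg at hall
    obtain ⟨j, hj1, hj2⟩ := hall
    exact ⟨⟨j, hj1, hj2⟩, ⟨j, hj1, hj2⟩⟩
end

section
/- Let A be a finite alphabet, M ≥ 1 an integer, B ⊆ A^M a set of borders, and k ≥ M. For a word w = a₁⋯a_{k+1} ∈ A^{k+1}, let w₁ = a₁⋯a_k and w₂ = a₂⋯a_{k+1} be its two factors of length k. Then there exists a finite word x ∈ A* such that a₁ · l_{w₂} = l_{w₁} · x; equivalently, the splitting points satisfy s(w₁) ≤ s(w₂) + 1. -/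
/- Left-infinite words over an alphabet `A` are functions `ℕ → A`;
`w n` is the letter at distance `n` from the right end. -/

variable {A : Type*}

lemma bddAbove_isBound (B : Set (List A)) (M : ℕ) (v : List A) :
    BddAbove {m | IsBound B M v m} :=
  ⟨v.length, fun _ hm => hm.2.1⟩

lemma splitPoint_isBound (B : Set (List A)) (M : ℕ) (v : List A)
    (h : ∃ m, IsBound B M v m) : IsBound B M v (splitPoint B M v) := by
  rw [splitPoint, if_pos h]
  exact Nat.sSup_mem h (bddAbove_isBound B M v)

lemma le_splitPoint (B : Set (List A)) (M : ℕ) (v : List A) (m : ℕ)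
    (h : IsBound B M v m) : m ≤ splitPoint B M v := by
  rw [splitPoint, if_pos ⟨m, h⟩]
  exact le_csSup (bddAbove_isBound B M v) h

lemma splitPoint_of_not (B : Set (List A)) (M : ℕ) (v : List A)
    (h : ¬∃ m, IsBound B M v m) : splitPoint B M v = v.length := by
  rw [splitPoint, if_neg h]

lemma splitPoint_le (B : Set (List A)) (M : ℕ) (v : List A) :
    splitPoint B M v ≤ v.length := by
  by_cases h : ∃ m, IsBound B M v m
  · exact (splitPoint_isBound B M v h).2.1
  · exact le_of_eq (splitPoint_of_not B M v h)

/-- for `w = a₁⋯a_{k+1}`, `w₁ = a₁⋯a_k`, `w₂ = a₂⋯a_{k+1}`, there is `x` with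
`a₁ · l_{w₂} = l_{w₁} · x`; equivalently `s(w₁) ≤ s(w₂) + 1`. -/
theorem stmt1 [Fintype A] (M : ℕ) (hM : 1 ≤ M) (B : Set (List A))
    (hB : ∀ b ∈ B, b.length = M) (k : ℕ) (hk : M ≤ k)
    (w : List A) (hw : w.length = k + 1) :
    (∃ x : List A,
        w.take 1 ++ (w.drop 1).take (splitPoint B M (w.drop 1)) =
          (w.take k).take (splitPoint B M (w.take k)) ++ x) ∧
      splitPoint B M (w.take k) ≤ splitPoint B M (w.drop 1) + 1 := by
  have hw1len : (w.take k).length = k := by simp [hw]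
  have hw2len : (w.drop 1).length = k := by simp [hw]
  have hfac : ∀ m, M ≤ m → m + 1 ≤ k →
      factorAt M (w.take k) (m + 1) = factorAt M (w.drop 1) m := by
    intro m hMm hmk
    unfold factorAt
    rw [List.take_take, min_eq_left hmk]
    have h1 : (w.drop 1).take m = (w.take (m + 1)).drop 1 := by
      rw [List.drop_take]
      simp
    rw [h1, List.drop_drop]
    congr 1
    omega
  have h12 : ∀ m, IsBound B M (w.drop 1) m → m + 1 ≤ k →
      IsBound B M (w.take k) (m + 1) := by
    intro m hm hmk
    exact ⟨le_trans hm.1 (Nat.le_succ _), by rw [hw1len]; exact hmk,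
      by rw [hfac m hm.1 hmk]; exact hm.2.2⟩
  have h21 : ∀ m, IsBound B M (w.take k) m → M + 1 ≤ m →
      IsBound B M (w.drop 1) (m - 1) := by
    intro m hm hMm
    have hmk : m ≤ k := hw1len ▸ hm.2.1
    refine ⟨by omega, by rw [hw2len]; omega, ?_⟩
    have heq := hfac (m - 1) (by omega) (by omega)
    have hm1 : m - 1 + 1 = m := by omega
    rw [hm1] at heq
    rw [← heq]
    exact hm.2.2
  have hs1k : splitPoint B M (w.take k) ≤ k := by
    have := splitPoint_le B M (w.take k)
    rwa [hw1len] at this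
  have hineq : splitPoint B M (w.take k) ≤ splitPoint B M (w.drop 1) + 1 := by
    by_cases h1 : ∃ m, IsBound B M (w.take k) m
    · have hs1 := splitPoint_isBound B M (w.take k) h1
      set s₁ := splitPoint B M (w.take k) with hs₁def
      by_cases hM1 : M + 1 ≤ s₁
      · have hb2 := h21 s₁ hs1 hM1
        have := le_splitPoint B M (w.drop 1) (s₁ - 1) hb2
        omega
      · have hs1M : s₁ ≤ M := by omega
        by_cases h2 : ∃ m, IsBound B M (w.drop 1) m
        · have := (splitPoint_isBound B M (w.drop 1) h2).1
          omega
        · rw [splitPoint_of_not B M (w.drop 1) h2, hw2len]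
          omega
    · rw [splitPoint_of_not B M (w.take k) h1, hw1len]
      by_cases h2 : ∃ m, IsBound B M (w.drop 1) m
      · have hs2 := splitPoint_isBound B M (w.drop 1) h2
        set s₂ := splitPoint B M (w.drop 1) with hs₂def
        have hle : s₂ ≤ k := hw2len ▸ hs2.2.1
        by_cases hc : s₂ + 1 ≤ k
        · exact absurd ⟨_, h12 s₂ hs2 hc⟩ h1
        · omega
      · rw [splitPoint_of_not B M (w.drop 1) h2, hw2len]
        omega
  refine ⟨⟨(w.take (1 + splitPoint B M (w.drop 1))).drop (splitPoint B M (w.take k)), ?_⟩, hineq⟩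
  set s₁ := splitPoint B M (w.take k)
  set s₂ := splitPoint B M (w.drop 1)
  rw [← List.take_add, List.take_take, min_eq_left hs1k]
  have h1 : w.take s₁ = (w.take (1 + s₂)).take s₁ := by
    rw [List.take_take, min_eq_left (by omega)]
  rw [h1, List.take_append_drop]
end

section
/- Let A be a finite alphabet, let M > Q ≥ 1 be integers, let k = M + Q, and let B ⊆ A^M be a set of borders such that g(b₁, b₂) > Q for all distinct b₁, b₂ ∈ B. Let w ∈ A^k be a word of length k that has a bound, let ℓ be its last bound, and suppose that g(w₍ℓ₎, w₍ℓ₎) > Q. Then ℓ is the unique bound of w. -/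
/- Left-infinite words over an alphabet `A` are functions `ℕ → A`;
`w n` is the letter at distance `n` from the right end. -/

variable {A : Type*}

lemma drop_take_append_drop (l : List A) (a b : ℕ) (hab : a ≤ b) (hb : b ≤ l.length) :
    (l.take b).drop a ++ l.drop b = l.drop a := by
  conv_rhs => rw [← List.take_append_drop b l]
  rw [List.drop_append]
  have : b - l.length = 0 := by omega
  have hlen : (l.take b).length = b := by simp; omega
  rw [hlen]
  have : a - b = 0 := by omega
  rw [this, List.drop_zero]

/-- let `k = M + Q` and let `w ∈ A^k` have last bound `ℓ` whose border has
self-gap `> Q`; then `ℓ` is the unique bound of `w`. -/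
theorem stmt8 [Fintype A] (M Q : ℕ) (hQ : 1 ≤ Q) (hQM : Q < M)
    (B : Set (List A)) (hB : ∀ b ∈ B, b.length = M)
    (hgap : ∀ b₁ ∈ B, ∀ b₂ ∈ B, b₁ ≠ b₂ → Q < gap b₁ b₂)
    (w : List A) (hw : w.length = M + Q)
    (ℓ : ℕ) (hℓ : IsBound B M w ℓ) (hlast : ∀ m, IsBound B M w m → m ≤ ℓ)
    (hself : Q < gap (factorAt M w ℓ) (factorAt M w ℓ)) :
    ∀ m, IsBound B M w m → m = ℓ := by
  intro m hm
  by_contra hne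
  have hmℓ : m < ℓ := lt_of_le_of_ne (hlast m hm) hne
  obtain ⟨hMm, hmlen, hmB⟩ := hm
  obtain ⟨hMℓ, hℓlen, hℓB⟩ := hℓ
  have hd : gap (factorAt M w m) (factorAt M w ℓ) ≤ ℓ - m := by
    apply Nat.sInf_le
    refine ⟨(w.take ℓ).drop m, (w.take (ℓ - M)).drop (m - M), ?_, ?_, ?_, Or.inl ?_⟩
    · intro h
      have := congrArg List.length h
      simp at this
      omega
    · intro h
      have := congrArg List.length h
      simp at this
      omega
    · simp; omega
    · have key : ∀ a b : ℕ, a ≤ b → b ≤ ℓ →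
          (w.take b).drop a ++ (w.take ℓ).drop b = (w.take ℓ).drop a := by
        intro a b hab hbl
        have h1 : w.take b = (w.take ℓ).take b := by
          rw [List.take_take]; congr 1; omega
        rw [h1]
        exact drop_take_append_drop _ a b hab (by simp; omega)
      unfold factorAt
      rw [key (m - M) m (by omega) (by omega),
          key (m - M) (ℓ - M) (by omega) (by omega)]
  by_cases heq : factorAt M w m = factorAt M w ℓ
  · rw [heq] at hd; omega
  · have := hgap _ hmB _ hℓB heq; omega
end

section
/- Let u be a primitive word over a finite alphabet A, let p ≥ 2 be an integer, and let x, z be finite words with uᵖ x = z uᵖ and 0 < |z| ≤ (p−1)·|u|. Then z = u^d for some integer d ≥ 1; in particular |u| divides |z|. -/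
/- Left-infinite words over an alphabet `A` are functions `ℕ → A`;
`w n` is the letter at distance `n` from the right end. -/

variable {A : Type*}

lemma listPow_length_aux (u : List A) (n : ℕ) : (listPow u n).length = n * u.length := by
  induction n with
  | zero => simp [listPow]
  | succ n ih => simp [listPow, ih]; ring

lemma listPow_add_aux (u : List A) (a b : ℕ) :
    listPow u (a + b) = listPow u a ++ listPow u b := by
  induction a with
  | zero => simp [listPow]
  | succ a ih => simp [listPow, Nat.succ_add, ih]

lemma take_app_aux (l₁ l₂ : List A) (n : ℕ) :
    (l₁ ++ l₂).take (l₁.length + n) = l₁ ++ l₂.take n := by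
  rw [List.take_append]; simp

lemma take_listPow_aux (u : List A) (q r m : ℕ) (hr : r ≤ u.length) (hm : q < m) :
    (listPow u m).take (q * u.length + r) = listPow u q ++ u.take r := by
  induction q generalizing m with
  | zero =>
    cases m with
    | zero => omega
    | succ m =>
      show (u ++ listPow u m).take (0 * u.length + r) = listPow u 0 ++ u.take r
      rw [Nat.zero_mul, Nat.zero_add, List.take_append_of_le_length hr]
      simp [listPow]
  | succ q ih =>
    cases m with
    | zero => omega
    | succ m =>
      show (u ++ listPow u m).take ((q + 1) * u.length + r) = listPow u (q + 1) ++ u.take r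
      have he : (q + 1) * u.length + r = u.length + (q * u.length + r) := by ring
      rw [he, take_app_aux, ih m (by omega)]
      simp [listPow]

lemma comm_pow_aux : ∀ n (s u : List A), s.length + u.length ≤ n → s ++ u = u ++ s →
    ∃ (t : List A) (a b : ℕ), s = listPow t a ∧ u = listPow t b := by
  intro n
  induction n with
  | zero =>
    intro s u hl _
    have hs : s = [] := List.length_eq_zero_iff.mp (by omega)
    have hu : u = [] := List.length_eq_zero_iff.mp (by omega)
    exact ⟨[], 0, 0, by simp [hs, listPow], by simp [hu, listPow]⟩
  | succ n IH =>
    have key : ∀ s u : List A, s.length + u.length ≤ n + 1 → s.length ≤ u.length →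
        s ++ u = u ++ s → ∃ (t : List A) (a b : ℕ), s = listPow t a ∧ u = listPow t b := by
      intro s u hl hle h
      rcases eq_or_ne s [] with rfl | hs
      · exact ⟨u, 0, 1, by simp [listPow], by simp [listPow]⟩
      · have hspre : u.take s.length = s := by
          have h1 : (s ++ u).take s.length = s := List.take_left (l₁ := s) (l₂ := u)
          rw [h] at h1
          rwa [List.take_append_of_le_length hle] at h1
        set w := u.drop s.length with hw
        have hu : u = s ++ w := by rw [← hspre, hw, List.take_append_drop]
        have hcomm : s ++ w = w ++ s := by
          have h2 := h
          rw [hu, List.append_assoc] at h2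
          exact List.append_cancel_left h2
        have hslen : 1 ≤ s.length := by
          cases s with
          | nil => exact absurd rfl hs
          | cons a l => simp
        have hwl : s.length + w.length ≤ n := by
          have : s.length + w.length = u.length := by rw [hu]; simp
          omega
        obtain ⟨t, a, b, hsa, hwb⟩ := IH s w hwl hcomm
        exact ⟨t, a, a + b, hsa, by rw [hu, hsa, hwb, listPow_add_aux]⟩
    intro s u hl h
    rcases le_total s.length u.length with hle | hle
    · exact key s u hl hle h
    · obtain ⟨t, a, b, h1, h2⟩ := key u s (by omega) hle h.symm
      exact ⟨t, b, a, h2, h1⟩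

/-- A primitive word does not commute with a shorter nonempty word. -/
lemma prim_no_comm (u : List A) (hu : Primitive u) (s : List A) (hs : s ≠ [])
    (hlen : s.length < u.length) (h : s ++ u = u ++ s) : False := by
  obtain ⟨t, a, b, hsa, hub⟩ := comm_pow_aux (s.length + u.length) s u le_rfl h
  have hsl : s.length = a * t.length := by rw [hsa, listPow_length_aux]
  have hul : u.length = b * t.length := by rw [hub, listPow_length_aux]
  have hspos : 0 < s.length := List.length_pos_iff.mpr hs
  have ha1 : 1 ≤ a := by
    rcases Nat.eq_zero_or_pos a with rfl | h1
    · rw [Nat.zero_mul] at hsl; omega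
    · exact h1
  have htle : t.length ≤ a * t.length := Nat.le_mul_of_pos_left _ ha1
  have hb2 : 2 ≤ b := by
    by_contra hc
    have hb1 : b = 0 ∨ b = 1 := by omega
    rcases hb1 with rfl | rfl
    · rw [Nat.zero_mul] at hul; omega
    · rw [Nat.one_mul] at hul; omega
  exact hu.2 t b hb2 hub

/-- if `u` is primitive, `p ≥ 2`, `uᵖ x = z uᵖ` and `0 < |z| ≤ (p-1)|u|`,
then `z = u^d` for some `d ≥ 1`; in particular `|u|` divides `|z|`. -/
theorem stmt10 [Fintype A] (u : List A) (hu : Primitive u) (p : ℕ) (hp : 2 ≤ p)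
    (x z : List A) (h : listPow u p ++ x = z ++ listPow u p)
    (hz : 0 < z.length) (hz' : z.length ≤ (p - 1) * u.length) :
    (∃ d : ℕ, 1 ≤ d ∧ z = listPow u d) ∧ u.length ∣ z.length := by
  obtain ⟨hune, hprim⟩ := hu
  have hL : 0 < u.length := List.length_pos_iff.mpr hune
  set L := u.length with hLdef
  obtain ⟨q, r, hqr, hrL⟩ : ∃ q r, q * L + r = z.length ∧ r < L :=
    ⟨z.length / L, z.length % L, by rw [Nat.mul_comm]; exact Nat.div_add_mod _ _,
      Nat.mod_lt _ hL⟩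
  have hp1 : (p - 1) * L ≤ p * L := Nat.mul_le_mul (by omega) le_rfl
  have hp2 : (p - 1) * L < p * L := (Nat.mul_lt_mul_right hL).mpr (by omega)
  have hzle : z.length ≤ p * L := le_trans hz' hp1
  have hzpre : z = (listPow u p).take z.length := by
    have h1 : (z ++ listPow u p).take z.length = z := List.take_left
    rw [← h, List.take_append_of_le_length (by rw [listPow_length_aux]; exact hzle)] at h1
    exact h1.symm
  have hqp : q < p := by
    by_contra hc; push_neg at hc
    have h2 : p * L ≤ q * L := Nat.mul_le_mul hc le_rfl
    omega
  have hz2 : z = listPow u q ++ u.take r := by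
    rw [hzpre, ← hqr, take_listPow_aux u q r p (le_of_lt hrL) hqp]
  rcases Nat.eq_zero_or_pos r with hr0 | hrpos
  · -- r = 0 : z = u^q
    have hzq : z = listPow u q := by rw [hz2, hr0]; simp
    have hq1 : 1 ≤ q := by
      rcases Nat.eq_zero_or_pos q with h0 | h1
      · exfalso; rw [h0, Nat.zero_mul] at hqr; omega
      · exact h1
    exact ⟨⟨q, hq1, hzq⟩, ⟨q, by rw [← hqr, hr0, Nat.add_zero, Nat.mul_comm]⟩⟩
  · -- r > 0 : derive a contradiction
    exfalso
    set s := u.take r with hsdef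
    have hslen : s.length = r := by
      rw [hsdef, List.length_take]; omega
    have hqp1 : q < p - 1 := by
      by_contra hc; push_neg at hc
      have h2 : (p - 1) * L ≤ q * L := Nat.mul_le_mul hc le_rfl
      omega
    obtain ⟨k, hpk, hk2⟩ : ∃ k, p = q + k ∧ 2 ≤ k := ⟨p - q, by omega, by omega⟩
    have hsplit : listPow u p = listPow u q ++ listPow u k := by
      rw [hpk, listPow_add_aux]
    have heq : listPow u k ++ x = s ++ listPow u p := by
      have h2 : listPow u q ++ (listPow u k ++ x) = listPow u q ++ (s ++ listPow u p) := by
        rw [← List.append_assoc, ← hsplit, h, hz2, List.append_assoc]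
      exact List.append_cancel_left h2
    -- take (r + L) of both sides
    have hRHS : (s ++ listPow u p).take (r + L) = s ++ u := by
      have : r + L = s.length + L := by rw [hslen]
      rw [this, take_app_aux]
      congr 1
      obtain ⟨p', rfl⟩ : ∃ p', p = p' + 1 := ⟨p - 1, by omega⟩
      show (u ++ listPow u p').take L = u
      exact List.take_left' rfl
    have hLHS : (listPow u k ++ x).take (r + L) = u ++ s := by
      obtain ⟨k', rfl⟩ : ∃ k', k = k' + 1 := ⟨k - 1, by omega⟩
      have hk1 : 1 ≤ k' := by omega
      show ((u ++ listPow u k') ++ x).take (r + L) = u ++ s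
      rw [List.append_assoc]
      have : r + L = L + r := by omega
      rw [this]
      show (u ++ (listPow u k' ++ x)).take (u.length + r) = u ++ s
      rw [take_app_aux]
      congr 1
      rw [List.take_append_of_le_length
        (by rw [listPow_length_aux]; calc r ≤ L := le_of_lt hrL
              _ ≤ k' * L := Nat.le_mul_of_pos_left L hk1)]
      have := take_listPow_aux u 0 r k' (le_of_lt hrL) hk1
      simpa [listPow] using this
    have hcomm : u ++ s = s ++ u := by rw [← hLHS, ← hRHS, heq]
    exact prim_no_comm u ⟨hune, hprim⟩ s
      (by intro hnil; rw [hnil] at hslen; simp at hslen; omega)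
      (by omega) hcomm.symm
end

section
/- Let u be a primitive word over a finite alphabet A, let z₁, z₂ ∈ A* be finite words such that u is not a prefix of z₁ and u is not a prefix of z₂, and let a ∈ A be a letter. If u⁻∞ z₁ a = u⁻∞ z₂ (as left-infinite words), then either z₁a = z₂, or z₁a = u and z₂ is the empty word. -/
/- Left-infinite words over an alphabet `A` are functions `ℕ → A`;
`w n` is the letter at distance `n` from the right end. -/

variable {A : Type*}

/-! ### Auxiliary lemmas for `stmt14` -/

private lemma listPow_append (z : List A) (k m : ℕ) :
    listPow z (k + m) = listPow z k ++ listPow z m := by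
  induction k with
  | zero => simp [listPow]
  | succ k ih => rw [Nat.succ_add]; simp only [listPow]; rw [ih, List.append_assoc]

private lemma comm_listPow : ∀ (N : ℕ) (x y : List A), x.length + y.length ≤ N →
    x ++ y = y ++ x → ∃ z k m, x = listPow z k ∧ y = listPow z m := by
  intro N
  induction N with
  | zero =>
    intro x y hN _
    have hx : x = [] := List.length_eq_zero_iff.mp (by omega)
    have hy : y = [] := List.length_eq_zero_iff.mp (by omega)
    exact ⟨[], 0, 0, by simp [hx, listPow], by simp [hy, listPow]⟩
  | succ N ih =>
    intro x y hN hxy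
    rcases eq_or_ne x [] with hx | hx
    · exact ⟨y, 0, 1, by simp [hx, listPow], by simp [listPow]⟩
    rcases eq_or_ne y [] with hy | hy
    · exact ⟨x, 1, 0, by simp [listPow], by simp [hy, listPow]⟩
    rcases le_total x.length y.length with hle | hle
    · have hpre : x <+: y := by
        refine List.prefix_of_prefix_length_le ?_ (List.prefix_append y x) hle
        exact hxy ▸ List.prefix_append x y
      obtain ⟨y', rfl⟩ := hpre
      have hxx : x ++ y' = y' ++ x := by
        have h2 : x ++ (x ++ y') = x ++ (y' ++ x) := by
          simpa [List.append_assoc] using hxy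
        exact List.append_cancel_left h2
      have hlen : x.length + y'.length ≤ N := by
        have hx1 : 0 < x.length := List.length_pos_iff.mpr hx
        have hl : (x ++ y').length = x.length + y'.length := List.length_append
        omega
      obtain ⟨z, k, m', hzx, hzy⟩ := ih x y' hlen hxx
      exact ⟨z, k, k + m', hzx, by rw [listPow_append, ← hzx, ← hzy]⟩
    · have hpre : y <+: x := by
        refine List.prefix_of_prefix_length_le ?_ (List.prefix_append x y) hle
        exact hxy ▸ List.prefix_append y x
      obtain ⟨x', rfl⟩ := hpre
      have hyy : y ++ x' = x' ++ y := by
        have h2 : y ++ (y ++ x') = y ++ (x' ++ y) := by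
          simpa [List.append_assoc] using hxy.symm
        exact List.append_cancel_left h2
      have hlen : y.length + x'.length ≤ N := by
        have hy1 : 0 < y.length := List.length_pos_iff.mpr hy
        have hl : (y ++ x').length = y.length + x'.length := List.length_append
        omega
      obtain ⟨z, k, m', hzy, hzx⟩ := ih y x' hlen hyy
      exact ⟨z, k + m', k, by rw [listPow_append, ← hzy, ← hzx], hzy⟩

private lemma prim_no_rot (u : List A) (hu : Primitive u) (x y : List A)
    (hxy : u = x ++ y) (hyx : u = y ++ x) : x = [] ∨ y = [] := by
  by_contra hcon
  push_neg at hcon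
  obtain ⟨z, k, m, hx, hy⟩ := comm_listPow (x.length + y.length) x y le_rfl
    (hxy ▸ hyx)
  have hk : k ≠ 0 := by rintro rfl; exact hcon.1 (by simpa [listPow] using hx)
  have hm : m ≠ 0 := by rintro rfl; exact hcon.2 (by simpa [listPow] using hy)
  exact hu.2 z (k + m) (by omega) (by rw [hxy, hx, hy, listPow_append])

private lemma ext_getD (l₁ l₂ : List A) (d : A) (hlen : l₁.length = l₂.length)
    (h : ∀ i, i < l₁.length → l₁.getD i d = l₂.getD i d) : l₁ = l₂ := by
  apply List.ext_getElem hlen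
  intro i h1 h2
  have := h i h1
  rwa [List.getD_eq_getElem _ _ h1, List.getD_eq_getElem _ _ h2] at this

private lemma negPow_eq_getD (u : List A) (hu : u ≠ []) (d : A) (n : ℕ) :
    negPow u hu n = u.getD (u.length - 1 - n % u.length) d := by
  have hL : 0 < u.length := List.length_pos_iff.mpr hu
  have hlt : u.length - 1 - n % u.length < u.length := by
    have := Nat.mod_lt n hL
    omega
  rw [List.getD_eq_getElem u d hlt]
  rfl

private lemma app_lt (w : ℕ → A) (z : List A) (n : ℕ) (hn : n < z.length) (d : A) :
    app w z n = z.getD (z.length - 1 - n) d := by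
  rw [app, dif_pos hn, List.getD_eq_getElem z d (by omega)]
  rfl

private lemma app_ge (w : ℕ → A) (z : List A) (n : ℕ) (hn : z.length ≤ n) :
    app w z n = w (n - z.length) := by
  rw [app, dif_neg (by omega)]

private lemma period_dvd (u : List A) (hu : Primitive u) (d : ℕ) (hd : 0 < d)
    (hper : ∀ j, negPow u hu.1 (j + d) = negPow u hu.1 j) : u.length ∣ d := by
  have hL : 0 < u.length := List.length_pos_iff.mpr hu.1
  set D : A := u.head hu.1 with hD
  by_contra hnd
  have hr0 : 0 < d % u.length := by
    rcases Nat.eq_zero_or_pos (d % u.length) with h0 | h0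
    · exact absurd (Nat.dvd_of_mod_eq_zero h0) hnd
    · exact h0
  have hrL : d % u.length < u.length := Nat.mod_lt _ hL
  obtain ⟨r, hr⟩ : ∃ r, d % u.length = r := ⟨_, rfl⟩
  rw [hr] at hr0 hrL
  obtain ⟨c, hc⟩ : ∃ c, u.length - r = c := ⟨_, rfl⟩
  have key : ∀ s, s < u.length → u.getD s D = u.getD ((s + c) % u.length) D := by
    intro s hs
    have hj := hper (u.length - 1 - s)
    rw [negPow_eq_getD u hu.1 D, negPow_eq_getD u hu.1 D] at hj
    have hjd : (u.length - 1 - s + d) % u.length = (u.length - 1 - s + r) % u.length := by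
      rw [Nat.add_mod (u.length - 1 - s) d, hr, Nat.add_mod (u.length - 1 - s) r,
        Nat.mod_eq_of_lt hrL]
    rw [hjd, Nat.mod_eq_of_lt (show u.length - 1 - s < u.length by omega),
      show u.length - 1 - (u.length - 1 - s) = s from by omega] at hj
    rcases lt_or_ge s r with hsr | hsr
    · rw [Nat.mod_eq_sub_mod (show u.length ≤ u.length - 1 - s + r by omega),
        Nat.mod_eq_of_lt (show u.length - 1 - s + r - u.length < u.length by omega),
        show u.length - 1 - (u.length - 1 - s + r - u.length) = s + c from by omega] at hj
      rw [Nat.mod_eq_of_lt (show s + c < u.length by omega)]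
      exact hj.symm
    · rw [Nat.mod_eq_of_lt (show u.length - 1 - s + r < u.length by omega),
        show u.length - 1 - (u.length - 1 - s + r) = s - r from by omega] at hj
      rw [Nat.mod_eq_sub_mod (show u.length ≤ s + c by omega),
        Nat.mod_eq_of_lt (show s + c - u.length < u.length by omega),
        show s + c - u.length = s - r from by omega]
      exact hj.symm
  have hdropD : ∀ i, i < u.length - c → (u.drop c).getD i D = u.getD (c + i) D := by
    intro i hi
    rw [List.getD_eq_getElem _ _ (by simp <;> omega), List.getD_eq_getElem _ _ (by omega),
      List.getElem_drop]
  have htakeD : ∀ i, i < c → (u.take c).getD i D = u.getD i D := by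
    intro i hi
    rw [List.getD_eq_getElem _ _ (by simp <;> omega), List.getD_eq_getElem _ _ (by omega),
      List.getElem_take]
  have hrot : u = u.drop c ++ u.take c := by
    apply ext_getD _ _ D (by simp <;> omega)
    intro i hi
    rcases lt_or_ge i (u.length - c) with hic | hic
    · rw [List.getD_append _ _ _ _ (by simp <;> omega), hdropD i hic,
        key i hi, Nat.mod_eq_of_lt (by omega), Nat.add_comm i c]
    · rw [List.getD_append_right _ _ _ _ (by simp <;> omega)]
      have hidx : i - (u.drop c).length = i + c - u.length := by simp <;> omega
      rw [hidx, htakeD _ (by omega), key i hi,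
        Nat.mod_eq_sub_mod (show u.length ≤ i + c by omega),
        Nat.mod_eq_of_lt (show i + c - u.length < u.length by omega)]
  rcases prim_no_rot u hu (u.take c) (u.drop c) (List.take_append_drop c u).symm hrot
    with h0 | h0
  · have hlen := congrArg List.length h0
    rw [List.length_take] at hlen
    simp only [List.length_nil] at hlen
    omega
  · have := congrArg List.length h0
    simp at this
    omega

private lemma negPow_getD_of_dvd (u : List A) (hu : u ≠ []) (D : A) {d i : ℕ}
    (hdvd : u.length ∣ d) (hiL : i < u.length) (hid : i < d) :
    negPow u hu (d - 1 - i) = u.getD i D := by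
  rw [negPow_eq_getD u hu D]
  obtain ⟨q, hq⟩ := hdvd
  rcases Nat.eq_zero_or_pos q with rfl | hqpos
  · omega
  obtain ⟨q', rfl⟩ : ∃ q', q = q' + 1 := ⟨q - 1, by omega⟩
  have hP : d = q' * u.length + u.length := by rw [hq]; ring
  have harith : d - 1 - i = (u.length - 1 - i) + q' * u.length := by
    have h1 : 0 ≤ q' * u.length := Nat.zero_le _
    omega
  have hmod : (d - 1 - i) % u.length = u.length - 1 - i := by
    rw [harith, Nat.add_mul_mod_self_right, Nat.mod_eq_of_lt (by omega)]
  rw [hmod]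
  congr 1
  omega

/-- if `u` is primitive, `u` is a prefix of neither `z₁` nor `z₂`, and
`u⁻∞ z₁ a = u⁻∞ z₂`, then `z₁a = z₂`, or `z₁a = u` and `z₂` is empty. -/
theorem stmt14 [Fintype A] (u : List A) (hu : Primitive u)
    (z₁ z₂ : List A) (h₁ : ¬ u <+: z₁) (h₂ : ¬ u <+: z₂) (a : A)
    (h : app (negPow u hu.1) (z₁ ++ [a]) = app (negPow u hu.1) z₂) :
    z₁ ++ [a] = z₂ ∨ (z₁ ++ [a] = u ∧ z₂ = []) := by
  set D : A := u.head hu.1 with hD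
  have hL : 0 < u.length := List.length_pos_iff.mpr hu.1
  have hk : ∀ k, app (negPow u hu.1) (z₁ ++ [a]) k = app (negPow u hu.1) z₂ k :=
    fun k => congrFun h k
  set m := z₁.length + 1 with hmdef
  set n := z₂.length with hndef
  have hm : (z₁ ++ [a]).length = m := by simp [hmdef]
  rcases lt_trichotomy m n with hc | hc | hc
  · -- m < n : contradiction with h₂
    exfalso
    have hper : ∀ j, negPow u hu.1 (j + (n - m)) = negPow u hu.1 j := by
      intro j
      have hj := hk (j + n)
      rw [app_ge _ _ _ (by simp <;> omega), app_ge _ _ _ (by omega),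
        show j + n - (z₁ ++ [a]).length = j + (n - m) from by simp <;> omega,
        show j + n - z₂.length = j from by omega] at hj
      exact hj
    have hdvd := period_dvd u hu (n - m) (by omega) hper
    have hLd : u.length ≤ n - m := Nat.le_of_dvd (by omega) hdvd
    apply h₂
    have htake : z₂.take u.length = u := by
      apply ext_getD _ _ D (by simp <;> omega)
      intro i hi
      have hiL : i < u.length := by simp at hi; omega
      have htD : (z₂.take u.length).getD i D = z₂.getD i D := by
        rw [List.getD_eq_getElem _ _ hi, List.getD_eq_getElem _ _ (by omega),
          List.getElem_take]
      rw [htD]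
      have hj := hk (n - 1 - i)
      rw [app_ge _ _ _ (by simp <;> omega), app_lt _ _ _ (by omega) D,
        show n - 1 - i - (z₁ ++ [a]).length = (n - m) - 1 - i from by simp <;> omega,
        show z₂.length - 1 - (n - 1 - i) = i from by omega,
        negPow_getD_of_dvd u hu.1 D hdvd hiL (by omega)] at hj
      exact hj.symm
    exact htake ▸ List.take_prefix u.length z₂
  · -- m = n : left disjunct
    left
    apply ext_getD _ _ D (by simp <;> omega)
    intro i hi
    have him : i < m := by rw [hm] at hi; exact hi
    have hj := hk (m - 1 - i)
    rw [app_lt _ _ _ (by simp <;> omega) D, app_lt _ _ _ (by omega) D,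
      show (z₁ ++ [a]).length - 1 - (m - 1 - i) = i from by simp <;> omega,
      show z₂.length - 1 - (m - 1 - i) = i from by omega] at hj
    exact hj
  · -- m > n : right disjunct
    have hper : ∀ j, negPow u hu.1 (j + (m - n)) = negPow u hu.1 j := by
      intro j
      have hj := hk (j + m)
      rw [app_ge _ _ _ (by simp <;> omega), app_ge _ _ _ (by omega),
        show j + m - (z₁ ++ [a]).length = j from by simp <;> omega,
        show j + m - z₂.length = j + (m - n) from by omega] at hj
      exact hj.symm
    have hdvd := period_dvd u hu (m - n) (by omega) hper
    have hLd : u.length ≤ m - n := Nat.le_of_dvd (by omega) hdvd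
    have hpre : u <+: z₁ ++ [a] := by
      have htake : (z₁ ++ [a]).take u.length = u := by
        apply ext_getD _ _ D (by simp <;> omega)
        intro i hi
        have hiL : i < u.length := by simp at hi; omega
        have htD : ((z₁ ++ [a]).take u.length).getD i D = (z₁ ++ [a]).getD i D := by
          rw [List.getD_eq_getElem _ _ hi, List.getD_eq_getElem _ _ (by simp <;> omega),
            List.getElem_take]
        rw [htD]
        have hj := hk (m - 1 - i)
        rw [app_lt _ _ _ (by simp <;> omega) D, app_ge _ _ _ (by omega),
          show (z₁ ++ [a]).length - 1 - (m - 1 - i) = i from by simp <;> omega,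
          show m - 1 - i - z₂.length = (m - n) - 1 - i from by omega,
          negPow_getD_of_dvd u hu.1 D hdvd hiL (by omega)] at hj
        exact hj
      exact htake ▸ List.take_prefix u.length (z₁ ++ [a])
    have hmL : m ≤ u.length := by
      by_contra hcon
      exact h₁ (List.prefix_of_prefix_length_le hpre (List.prefix_append z₁ [a])
        (by omega))
    right
    constructor
    · exact (hpre.eq_of_length (by simp <;> omega)).symm
    · exact List.length_eq_zero_iff.mp (by omega)
end
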